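/- For every a ∈ ℝ and every k ∈ ℕ, ∫_ℝ |h_k(y − i·a)|² dy = ∫_ℝ h_k(y)²·e^{−2ay} dy. -/

import Mathlib

open MeasureTheory

/-- The creation (raising) operator `f ↦ z f - f'` on functions of a complex variable. -/
noncomputable def raiseOp (f : ℂ → ℂ) : ℂ → ℂ := fun z => z * f z - deriv f z

/-- The Hermite function `h_k(z) = (2^k k! √π)^{-1/2} (z - d/dz)^k e^{-z²/2}`,
as an entire function of a complex variable. -/
noncomputable def hermiteFun (k : ℕ) (z : ℂ) : ℂ :=
  ((Real.sqrt ((2 : ℝ) ^ k * (k.factorial : ℝ) * Real.sqrt Real.pi) : ℝ) : ℂ)⁻¹ *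
    (raiseOp^[k] fun w => Complex.exp (-(w ^ 2) / 2)) z

namespace HermiteShiftAux

open Polynomial Finset

/-- Physicists' Hermite polynomials over ℤ: `Hp (n+1) = 2 X Hp n - (Hp n)'`. -/
noncomputable def Hp : ℕ → Polynomial ℤ
  | 0 => 1
  | n + 1 => 2 * X * Hp n - derivative (Hp n)

lemma Hp_zero : Hp 0 = 1 := rfl
lemma Hp_succ (n : ℕ) : Hp (n + 1) = 2 * X * Hp n - derivative (Hp n) := rfl

lemma Hp_natDegree_le (n : ℕ) : (Hp n).natDegree ≤ n := by
  induction n with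
  | zero => simp [Hp_zero]
  | succ n ih =>
    rw [Hp_succ]
    refine le_trans (natDegree_sub_le _ _) (max_le ?_ ?_)
    · refine le_trans (natDegree_mul_le) ?_
      have : (2 * X : Polynomial ℤ).natDegree ≤ 1 := le_trans (natDegree_mul_le) (by simp)
      omega
    · have := Polynomial.natDegree_derivative_le (Hp n)
      omega

/-- The image of `Hp` in `ℂ[X]`. -/
noncomputable def HC (n : ℕ) : Polynomial ℂ := (Hp n).map (Int.castRingHom ℂ)
/-- The image of `Hp` in `ℝ[X]`. -/
noncomputable def HR (n : ℕ) : Polynomial ℝ := (Hp n).map (Int.castRingHom ℝ)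

lemma HC_zero : HC 0 = 1 := by simp [HC, Hp_zero]
lemma HR_zero : HR 0 = 1 := by simp [HR, Hp_zero]

lemma HC_succ (n : ℕ) : HC (n + 1) = 2 * X * HC n - derivative (HC n) := by
  simp [HC, Hp_succ, Polynomial.map_sub, Polynomial.map_mul, derivative_map]

lemma HR_succ (n : ℕ) : HR (n + 1) = 2 * X * HR n - derivative (HR n) := by
  simp [HR, Hp_succ, Polynomial.map_sub, Polynomial.map_mul, derivative_map]

lemma HR_natDegree_le (n : ℕ) : (HR n).natDegree ≤ n :=
  le_trans natDegree_map_le (Hp_natDegree_le n)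

lemma HC_eq_HR_map (n : ℕ) : HC n = (HR n).map Complex.ofRealHom := by
  rw [HC, HR, Polynomial.map_map]
  congr 1

/-- Evaluation of `HC` at a real point is real. -/
lemma eval_HC_ofReal (n : ℕ) (y : ℝ) :
    eval (y : ℂ) (HC n) = ((eval y (HR n) : ℝ) : ℂ) := by
  rw [HC_eq_HR_map, eval_map]
  exact eval₂_hom _ _

/-- Evaluation of `HC` commutes with conjugation. -/
lemma eval_HC_conj (n : ℕ) (z : ℂ) :
    (starRingEnd ℂ) (eval z (HC n)) = eval ((starRingEnd ℂ) z) (HC n) := by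
  have h1 : (HC n).map (starRingEnd ℂ) = HC n := by
    rw [HC, Polynomial.map_map]
    congr 1
    exact RingHom.ext_int _ _
  conv_rhs => rw [← h1]
  rw [eval_map]
  exact (eval₂_hom _ _).symm

/-- Addition formula for physicists' Hermite polynomials. -/
lemma HC_comp_add (k : ℕ) (u : ℂ) :
    (HC k).comp (X + C u) =
      ∑ j ∈ range (k + 1), C ((k.choose j : ℂ) * (2 * u) ^ (k - j)) * HC j := by
  induction k with
  | zero => simp [HC_zero]
  | succ k ih =>
    have hcomp : (HC (k + 1)).comp (X + C u) =
        2 * X * ((HC k).comp (X + C u)) + C (2 * u) * ((HC k).comp (X + C u))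
          - derivative ((HC k).comp (X + C u)) := by
      rw [HC_succ]
      simp only [sub_comp, mul_comp, X_comp, C_comp, derivative_comp, derivative_add,
        derivative_X, derivative_C, add_zero, one_mul, Polynomial.ofNat_comp, C_mul, map_ofNat]
      ring
    rw [hcomp, ih]
    have hder : derivative (∑ j ∈ range (k + 1),
        C ((k.choose j : ℂ) * (2 * u) ^ (k - j)) * HC j) =
        ∑ j ∈ range (k + 1), C ((k.choose j : ℂ) * (2 * u) ^ (k - j)) * derivative (HC j) := by
      rw [derivative_sum]
      exact Finset.sum_congr rfl fun j _ => derivative_C_mul _ _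
    rw [hder, Finset.mul_sum, Finset.mul_sum, ← Finset.sum_add_distrib, ← Finset.sum_sub_distrib]
    have hterm : ∀ j ∈ range (k + 1),
        2 * X * (C ((k.choose j : ℂ) * (2 * u) ^ (k - j)) * HC j)
          + C (2 * u) * (C ((k.choose j : ℂ) * (2 * u) ^ (k - j)) * HC j)
          - C ((k.choose j : ℂ) * (2 * u) ^ (k - j)) * derivative (HC j)
        = C ((k.choose j : ℂ) * (2 * u) ^ (k - j)) * HC (j + 1)
          + C ((k.choose j : ℂ) * (2 * u) ^ (k - j) * (2 * u)) * HC j := by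
      intro j _
      rw [HC_succ]
      simp only [C_mul, C_pow, map_ofNat]
      ring
    rw [Finset.sum_congr rfl hterm, Finset.sum_add_distrib]
    rw [Finset.sum_range_succ'
      (fun j => C (((k + 1).choose j : ℂ) * (2 * u) ^ (k + 1 - j)) * HC j) (k + 1)]
    rw [Finset.sum_range_succ'
      (fun j => C ((k.choose j : ℂ) * (2 * u) ^ (k - j) * (2 * u)) * HC j) k]
    have hext : ∑ j ∈ range k,
        C ((k.choose (j + 1) : ℂ) * (2 * u) ^ (k - (j + 1)) * (2 * u)) * HC (j + 1)
        = ∑ j ∈ range (k + 1),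
        C ((k.choose (j + 1) : ℂ) * (2 * u) ^ (k - (j + 1)) * (2 * u)) * HC (j + 1) := by
      rw [Finset.sum_range_succ]
      simp [Nat.choose_succ_self]
    rw [hext, ← add_assoc, ← Finset.sum_add_distrib]
    have hmain : ∀ j ∈ range (k + 1),
        C ((k.choose j : ℂ) * (2 * u) ^ (k - j)) * HC (j + 1)
          + C ((k.choose (j + 1) : ℂ) * (2 * u) ^ (k - (j + 1)) * (2 * u)) * HC (j + 1)
        = C (((k + 1).choose (j + 1) : ℂ) * (2 * u) ^ (k + 1 - (j + 1))) * HC (j + 1) := by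
      intro j hj
      rw [Finset.mem_range] at hj
      rw [← add_mul]
      congr 1
      by_cases hjk : j = k
      · subst hjk
        simp [Nat.choose_succ_self, Nat.choose_self]
      · have hlt : j < k := lt_of_le_of_ne (Nat.lt_succ_iff.mp hj) hjk
        have h1 : k - j = (k - (j + 1)) + 1 := by omega
        have h2 : k + 1 - (j + 1) = k - j := by omega
        have hcoef : ((k.choose j : ℂ)) * (2 * u) ^ (k - j)
            + (k.choose (j + 1) : ℂ) * (2 * u) ^ (k - (j + 1)) * (2 * u)
            = (((k + 1).choose (j + 1) : ℂ)) * (2 * u) ^ (k + 1 - (j + 1)) := by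
          rw [h2, Nat.choose_succ_succ k j, Nat.cast_add, h1, pow_succ]
          ring
        rw [← C_add, hcoef]
    rw [Finset.sum_congr rfl hmain]
    congr 1
    have hc : (k.choose 0 : ℂ) * (2 * u) ^ (k - 0) * (2 * u)
        = (((k + 1).choose 0 : ℂ)) * (2 * u) ^ (k + 1 - 0) := by
      simp [pow_succ]
    rw [hc]

/-! ### Integrability of polynomial × Gaussian -/

lemma pow_le_factorial_mul_exp (t : ℝ) (ht : 0 ≤ t) (n : ℕ) :
    t ^ n ≤ n.factorial * Real.exp t := by
  have h1 : t ^ n / n.factorial ≤ Real.exp t := by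
    refine le_trans ?_ (Real.sum_le_exp_of_nonneg ht (n + 1))
    exact Finset.single_le_sum (f := fun i => t ^ i / i.factorial)
      (fun i _ => by positivity) (Finset.self_mem_range_succ n)
  have h2 : (0 : ℝ) < n.factorial := by positivity
  calc t ^ n = (t ^ n / n.factorial) * n.factorial := by field_simp
  _ ≤ Real.exp t * n.factorial := mul_le_mul_of_nonneg_right h1 (le_of_lt h2)
  _ = n.factorial * Real.exp t := by ring

lemma integrable_pow_gauss (n : ℕ) :
    Integrable (fun x : ℝ => x ^ n * Real.exp (-x ^ 2)) := by
  have hmeas : AEStronglyMeasurable (fun x : ℝ => x ^ n * Real.exp (-x ^ 2)) volume :=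
    (Continuous.mul (continuous_pow n)
      (Real.continuous_exp.comp (by continuity))).aestronglyMeasurable
  have hG : Integrable (fun x : ℝ => Real.exp (-(1:ℝ) * x ^ 2)
      + (2 ^ n * n.factorial) * Real.exp (-(1/2 : ℝ) * x ^ 2)) :=
    (integrable_exp_neg_mul_sq one_pos).add
      ((integrable_exp_neg_mul_sq (by norm_num : (0:ℝ) < 1/2)).const_mul _)
  refine hG.mono' hmeas (Filter.Eventually.of_forall fun x => ?_)
  have hx2 : (0:ℝ) ≤ x ^ 2 := sq_nonneg x
  have habs : |x| ^ n ≤ 1 + (x ^ 2) ^ n := by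
    rcases le_or_gt (|x|) 1 with h | h
    · have h1 : |x| ^ n ≤ 1 := pow_le_one₀ (abs_nonneg x) h
      have h2 : (0:ℝ) ≤ (x ^ 2) ^ n := pow_nonneg hx2 n
      linarith
    · have hle : |x| ≤ x ^ 2 := by nlinarith [abs_nonneg x, sq_abs x]
      have h1 : |x| ^ n ≤ (x ^ 2) ^ n := pow_le_pow_left₀ (abs_nonneg x) hle n
      linarith
  have hkey : (x ^ 2) ^ n * Real.exp (-x ^ 2)
      ≤ (2 ^ n * n.factorial) * Real.exp (-(1/2 : ℝ) * x ^ 2) := by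
    have hp : (x ^ 2) ^ n ≤ 2 ^ n * n.factorial * Real.exp (x ^ 2 / 2) := by
      have h0 := pow_le_factorial_mul_exp (x ^ 2 / 2) (by positivity) n
      have h1 : (x ^ 2) ^ n = 2 ^ n * (x ^ 2 / 2) ^ n := by
        rw [← mul_pow]; ring_nf
      rw [h1]
      calc 2 ^ n * (x ^ 2 / 2) ^ n ≤ 2 ^ n * (n.factorial * Real.exp (x ^ 2 / 2)) :=
            mul_le_mul_of_nonneg_left h0 (by positivity)
        _ = 2 ^ n * n.factorial * Real.exp (x ^ 2 / 2) := by ring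
    calc (x ^ 2) ^ n * Real.exp (-x ^ 2)
        ≤ (2 ^ n * n.factorial * Real.exp (x ^ 2 / 2)) * Real.exp (-x ^ 2) :=
          mul_le_mul_of_nonneg_right hp (Real.exp_nonneg _)
      _ = (2 ^ n * n.factorial) * (Real.exp (x ^ 2 / 2) * Real.exp (-x ^ 2)) := by ring
      _ = (2 ^ n * n.factorial) * Real.exp (-(1/2 : ℝ) * x ^ 2) := by
          rw [← Real.exp_add]; ring_nf
  have hnorm : ‖x ^ n * Real.exp (-x ^ 2)‖ = |x| ^ n * Real.exp (-x ^ 2) := by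
    rw [Real.norm_eq_abs, abs_mul, abs_pow, abs_of_pos (Real.exp_pos _)]
  rw [hnorm]
  have h3 : |x| ^ n * Real.exp (-x ^ 2) ≤ (1 + (x ^ 2) ^ n) * Real.exp (-x ^ 2) :=
    mul_le_mul_of_nonneg_right habs (Real.exp_nonneg _)
  have h4 : (1 + (x ^ 2) ^ n) * Real.exp (-x ^ 2)
      = Real.exp (-(1:ℝ) * x ^ 2) + (x ^ 2) ^ n * Real.exp (-x ^ 2) := by ring_nf
  linarith

lemma integrable_poly_gauss (p : Polynomial ℝ) :
    Integrable (fun x : ℝ => eval x p * Real.exp (-x ^ 2)) := by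
  induction p using Polynomial.induction_on' with
  | monomial n c =>
    simp only [eval_monomial]
    exact ((integrable_pow_gauss n).const_mul c).congr
      (Filter.Eventually.of_forall fun x => by ring)
  | add p q hp hq =>
    simp only [eval_add]
    exact (hp.add hq).congr
      (Filter.Eventually.of_forall fun x => by simp [Pi.add_apply]; ring)

/-! ### Rodrigues formula -/

lemma hasDerivAt_gauss (x : ℝ) :
    HasDerivAt (fun x : ℝ => Real.exp (-x ^ 2)) (-2 * x * Real.exp (-x ^ 2)) x := by
  have h1 : HasDerivAt (fun x : ℝ => -x ^ 2) (-(2 * x)) x := by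
    exact (hasDerivAt_pow 2 x).neg.congr_deriv (by norm_num)
  simpa [mul_comm] using h1.exp

lemma hasDerivAt_poly_gauss (p : Polynomial ℝ) (x : ℝ) :
    HasDerivAt (fun x : ℝ => eval x p * Real.exp (-x ^ 2))
      (eval x (derivative p - 2 * X * p) * Real.exp (-x ^ 2)) x := by
  have h := (p.hasDerivAt x).mul (hasDerivAt_gauss x)
  refine h.congr_deriv ?_
  simp only [eval_sub, eval_mul, eval_ofNat, eval_X]
  ring

lemma rodrigues (n : ℕ) :
    deriv^[n] (fun x : ℝ => Real.exp (-x ^ 2))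
      = fun x => (-1 : ℝ) ^ n * eval x (HR n) * Real.exp (-x ^ 2) := by
  induction n with
  | zero => funext x; simp [HR_zero]
  | succ n ih =>
    funext x
    rw [Function.iterate_succ_apply', ih]
    have h1 : (fun x => (-1 : ℝ) ^ n * eval x (HR n) * Real.exp (-x ^ 2))
        = fun x => (-1 : ℝ) ^ n * (eval x (HR n) * Real.exp (-x ^ 2)) := by
      funext y; ring
    rw [h1, deriv_const_mul _ ((hasDerivAt_poly_gauss (HR n) x).differentiableAt),
      (hasDerivAt_poly_gauss (HR n) x).deriv]
    rw [HR_succ]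
    simp only [eval_sub, eval_mul, eval_ofNat, eval_X]
    ring

lemma hasDerivAt_iter_gauss (m : ℕ) (x : ℝ) :
    HasDerivAt (deriv^[m] (fun x : ℝ => Real.exp (-x ^ 2)))
      (deriv^[m + 1] (fun x : ℝ => Real.exp (-x ^ 2)) x) x := by
  rw [rodrigues m, rodrigues (m + 1)]
  have h1 : (fun x => (-1 : ℝ) ^ m * eval x (HR m) * Real.exp (-x ^ 2))
      = fun x => (-1 : ℝ) ^ m * (eval x (HR m) * Real.exp (-x ^ 2)) := by
    funext y; ring
  rw [h1]
  have h := (hasDerivAt_poly_gauss (HR m) x).const_mul ((-1 : ℝ) ^ m)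
  refine h.congr_deriv ?_
  rw [HR_succ]
  simp only [eval_sub, eval_mul, eval_ofNat, eval_X]
  ring

/-! ### Integration by parts and orthogonality -/

lemma ibp_step (p : Polynomial ℝ) (m : ℕ) :
    (∫ x : ℝ, eval x p * deriv^[m + 1] (fun x : ℝ => Real.exp (-x ^ 2)) x)
      = - ∫ x : ℝ, eval x (derivative p) * deriv^[m] (fun x : ℝ => Real.exp (-x ^ 2)) x := by
  have hint : ∀ (q : Polynomial ℝ) (j : ℕ), Integrable
      (fun x : ℝ => eval x q * deriv^[j] (fun x : ℝ => Real.exp (-x ^ 2)) x) := by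
    intro q j
    rw [rodrigues j]
    refine ((integrable_poly_gauss (q * HR j)).const_mul ((-1:ℝ)^j)).congr
      (Filter.Eventually.of_forall fun x => ?_)
    simp only [eval_mul]
    ring
  refine integral_mul_deriv_eq_deriv_mul_of_integrable
    (u' := fun x => eval x (derivative p)) (fun x _ => p.hasDerivAt x)
    (fun x _ => hasDerivAt_iter_gauss m x) ?_ ?_ ?_
  · exact hint p (m + 1)
  · exact hint (derivative p) m
  · exact hint p m

lemma ibp_ladder (p : Polynomial ℝ) (i m : ℕ) :
    (∫ x : ℝ, eval x p * deriv^[m + i] (fun x : ℝ => Real.exp (-x ^ 2)) x)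
      = (-1 : ℝ) ^ i *
        ∫ x : ℝ, eval x (derivative^[i] p) * deriv^[m] (fun x : ℝ => Real.exp (-x ^ 2)) x := by
  induction i generalizing p with
  | zero => simp
  | succ i ih =>
    have h1 : m + (i + 1) = (m + i) + 1 := by omega
    rw [h1, ibp_step p (m + i), ih (derivative p)]
    rw [Function.iterate_succ_apply]
    ring

lemma ortho_lt {j l : ℕ} (h : j < l) :
    (∫ x : ℝ, eval x (HR j) * eval x (HR l) * Real.exp (-x ^ 2)) = 0 := by
  have hgauss : ∀ x : ℝ, eval x (HR l) * Real.exp (-x ^ 2)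
      = (-1 : ℝ) ^ l * deriv^[l] (fun x : ℝ => Real.exp (-x ^ 2)) x := by
    intro x
    rw [rodrigues l]
    have hll : ((-1 : ℝ) ^ l) * ((-1 : ℝ) ^ l) = 1 := by
      rw [← pow_add]
      exact Even.neg_one_pow ⟨l, rfl⟩
    calc eval x (HR l) * Real.exp (-x ^ 2)
        = (((-1:ℝ)^l) * ((-1:ℝ)^l)) * (eval x (HR l) * Real.exp (-x ^ 2)) := by
          rw [hll]; ring
      _ = (-1 : ℝ) ^ l * ((-1 : ℝ) ^ l * eval x (HR l) * Real.exp (-x ^ 2)) := by ring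
  have h2 : (∫ x : ℝ, eval x (HR j) * eval x (HR l) * Real.exp (-x ^ 2))
      = (-1 : ℝ) ^ l *
        ∫ x : ℝ, eval x (HR j) * deriv^[l] (fun x : ℝ => Real.exp (-x ^ 2)) x := by
    rw [← integral_const_mul]
    congr 1
    funext x
    rw [mul_assoc, hgauss x]
    ring
  have h3 : l = (l - (j + 1)) + (j + 1) := by omega
  rw [h2, h3, ibp_ladder (HR j) (j + 1) (l - (j + 1))]
  have h4 : derivative^[j + 1] (HR j) = 0 :=
    iterate_derivative_eq_zero (lt_of_le_of_lt (HR_natDegree_le j) (Nat.lt_succ_self j))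
  rw [h4]
  simp

lemma ortho {j l : ℕ} (h : j ≠ l) :
    (∫ x : ℝ, eval x (HR j) * eval x (HR l) * Real.exp (-x ^ 2)) = 0 := by
  rcases lt_or_gt_of_ne h with hlt | hgt
  · exact ortho_lt hlt
  · rw [← ortho_lt hgt]
    congr 1
    funext x
    ring

/-! ### The key bilinear integral -/

/-- The shifted bilinear Gaussian integral, as a function of the two complex shifts. -/
noncomputable def J (k : ℕ) (u v : ℂ) : ℂ :=
  ∫ y : ℝ, eval ((y:ℂ) + u) (HC k) * eval ((y:ℂ) + v) (HC k) * (Real.exp (-y ^ 2) : ℂ)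

lemma J_eq (k : ℕ) (u v : ℂ) :
    J k u v = ∑ j ∈ range (k + 1),
      (((k.choose j : ℂ) * (2 * u) ^ (k - j)) * ((k.choose j : ℂ) * (2 * v) ^ (k - j))) *
        ((∫ x : ℝ, eval x (HR j) * eval x (HR j) * Real.exp (-x ^ 2) : ℝ) : ℂ) := by
  have hpt : ∀ y : ℝ,
      eval ((y:ℂ) + u) (HC k) * eval ((y:ℂ) + v) (HC k) * (Real.exp (-y ^ 2) : ℂ)
      = ∑ j ∈ range (k + 1), ∑ l ∈ range (k + 1),
          (((k.choose j : ℂ) * (2 * u) ^ (k - j)) * ((k.choose l : ℂ) * (2 * v) ^ (k - l))) *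
            ((eval y (HR j) * eval y (HR l) * Real.exp (-y ^ 2) : ℝ) : ℂ) := by
    intro y
    have hu : eval ((y:ℂ) + u) (HC k)
        = ∑ j ∈ range (k + 1), ((k.choose j : ℂ) * (2 * u) ^ (k - j)) * eval (y:ℂ) (HC j) := by
      have := congrArg (eval (y:ℂ)) (HC_comp_add k u)
      rw [eval_comp] at this
      simpa [eval_finset_sum] using this
    have hv : eval ((y:ℂ) + v) (HC k)
        = ∑ l ∈ range (k + 1), ((k.choose l : ℂ) * (2 * v) ^ (k - l)) * eval (y:ℂ) (HC l) := by
      have := congrArg (eval (y:ℂ)) (HC_comp_add k v)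
      rw [eval_comp] at this
      simpa [eval_finset_sum] using this
    rw [hu, hv, Finset.sum_mul_sum]
    rw [Finset.sum_mul]
    refine Finset.sum_congr rfl fun j _ => ?_
    rw [Finset.sum_mul]
    refine Finset.sum_congr rfl fun l _ => ?_
    rw [eval_HC_ofReal, eval_HC_ofReal]
    push_cast
    ring
  have hreal : ∀ j l : ℕ,
      Integrable (fun x : ℝ => eval x (HR j) * eval x (HR l) * Real.exp (-x ^ 2)) := by
    intro j l
    have h0 := integrable_poly_gauss (HR j * HR l)
    simpa [eval_mul] using h0
  have hintterm : ∀ j l : ℕ, Integrable (fun y : ℝ =>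
      (((k.choose j : ℂ) * (2 * u) ^ (k - j)) * ((k.choose l : ℂ) * (2 * v) ^ (k - l))) *
        ((eval y (HR j) * eval y (HR l) * Real.exp (-y ^ 2) : ℝ) : ℂ)) := by
    intro j l
    exact ((hreal j l).ofReal).const_mul _
  have h1 : J k u v = ∑ j ∈ range (k + 1), ∑ l ∈ range (k + 1),
      (((k.choose j : ℂ) * (2 * u) ^ (k - j)) * ((k.choose l : ℂ) * (2 * v) ^ (k - l))) *
        ((∫ x : ℝ, eval x (HR j) * eval x (HR l) * Real.exp (-x ^ 2) : ℝ) : ℂ) := by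
    rw [J, integral_congr_ae (Filter.Eventually.of_forall hpt)]
    rw [integral_finset_sum _ (fun j _ => integrable_finset_sum _ (fun l _ => hintterm j l))]
    refine Finset.sum_congr rfl fun j _ => ?_
    rw [integral_finset_sum _ (fun l _ => hintterm j l)]
    refine Finset.sum_congr rfl fun l _ => ?_
    rw [integral_const_mul]
    congr 1
    exact integral_ofReal
  rw [h1]
  refine Finset.sum_congr rfl fun j hj => ?_
  rw [Finset.sum_eq_single j]
  · intro l _ hlj
    rw [ortho (Ne.symm hlj)]
    simp
  · intro hjj
    exact absurd hj hjj

lemma J_congr (k : ℕ) {u v u' v' : ℂ} (h : u * v = u' * v') : J k u v = J k u' v' := by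
  rw [J_eq, J_eq]
  refine Finset.sum_congr rfl fun j _ => ?_
  congr 1
  have key : ∀ w w' : ℂ, ((k.choose j : ℂ) * (2 * w) ^ (k - j)) *
      ((k.choose j : ℂ) * (2 * w') ^ (k - j))
      = (k.choose j : ℂ) ^ 2 * ((2 * w) * (2 * w')) ^ (k - j) := by
    intro w w'
    conv_rhs => rw [mul_pow]
    ring
  have h4 : (2 * u) * (2 * v) = (2 * u') * (2 * v') := by
    calc (2 * u) * (2 * v) = (2 * 2) * (u * v) := mul_mul_mul_comm 2 u 2 v
      _ = (2 * 2) * (u' * v') := by rw [h]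
      _ = (2 * u') * (2 * v') := (mul_mul_mul_comm 2 u' 2 v').symm
  rw [key, key, h4]

/-! ### Structure of the Hermite functions -/

lemma raise_iter (k : ℕ) :
    (raiseOp^[k] fun w : ℂ => Complex.exp (-(w ^ 2) / 2))
      = fun z => eval z (HC k) * Complex.exp (-(z ^ 2) / 2) := by
  induction k with
  | zero => funext z; simp [HC_zero]
  | succ k ih =>
    funext z
    rw [Function.iterate_succ_apply', ih, raiseOp]
    have hE : ∀ w : ℂ, HasDerivAt (fun z : ℂ => Complex.exp (-(z ^ 2) / 2))
        (Complex.exp (-(w ^ 2) / 2) * (-w)) w := by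
      intro w
      have h1 : HasDerivAt (fun z : ℂ => -(z ^ 2) / 2) (-w) w := by
        have h0 := ((hasDerivAt_pow 2 w).neg.div_const 2)
        exact h0.congr_deriv (by push_cast; ring)
      exact h1.cexp
    have hF : HasDerivAt (fun z : ℂ => eval z (HC k) * Complex.exp (-(z ^ 2) / 2))
        (eval z (derivative (HC k)) * Complex.exp (-(z ^ 2) / 2)
          + eval z (HC k) * (Complex.exp (-(z ^ 2) / 2) * (-z))) z :=
      ((HC k).hasDerivAt z).mul (hE z)
    rw [hF.deriv, HC_succ]
    simp only [eval_sub, eval_mul, eval_ofNat, eval_X]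
    ring

lemma hermiteFun_eq (k : ℕ) (z : ℂ) :
    hermiteFun k z =
      ((Real.sqrt ((2 : ℝ) ^ k * (k.factorial : ℝ) * Real.sqrt Real.pi) : ℝ) : ℂ)⁻¹ *
        (eval z (HC k) * Complex.exp (-(z ^ 2) / 2)) := by
  rw [hermiteFun, raise_iter]

end HermiteShiftAux

open HermiteShiftAux Polynomial in
/-- `∫ |h_k(y - i a)|² dy = ∫ h_k(y)² e^{-2 a y} dy`  (here `h_k(y)` is real for real `y`,
so `h_k(y)² = ‖h_k(y)‖²`). -/
theorem hermite_shift_norm_eq_weighted (a : ℝ) (k : ℕ) :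
    (∫ y : ℝ, ‖hermiteFun k ((y : ℂ) - (a : ℂ) * Complex.I)‖ ^ 2) =
      ∫ y : ℝ, ‖hermiteFun k (y : ℂ)‖ ^ 2 * Real.exp (-2 * a * y) := by
  set s : ℝ :=
    ‖((Real.sqrt ((2 : ℝ) ^ k * (k.factorial : ℝ) * Real.sqrt Real.pi) : ℝ) : ℂ)⁻¹‖ ^ 2 with hs
  -- pointwise formula for the left integrand
  have hL : ∀ y : ℝ, ‖hermiteFun k ((y : ℂ) - (a : ℂ) * Complex.I)‖ ^ 2
      = (s * Real.exp (a ^ 2)) *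
        (‖eval ((y:ℂ) - (a:ℂ) * Complex.I) (HC k)‖ ^ 2 * Real.exp (-y ^ 2)) := by
    intro y
    rw [hermiteFun_eq, norm_mul, norm_mul]
    have hre : (-(((y:ℂ) - (a:ℂ) * Complex.I) ^ 2) / 2).re = (a ^ 2 - y ^ 2) / 2 := by
      simp [pow_two, Complex.mul_re, Complex.div_re, Complex.normSq]
    rw [Complex.norm_exp, hre]
    have hexp : Real.exp ((a ^ 2 - y ^ 2) / 2) ^ 2 = Real.exp (a ^ 2) * Real.exp (-y ^ 2) := by
      rw [sq, ← Real.exp_add, ← Real.exp_add]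
      ring_nf
    rw [mul_pow, mul_pow, hexp, ← hs]
    ring
  -- pointwise formula for the right integrand
  have hR : ∀ y : ℝ, ‖hermiteFun k (y : ℂ)‖ ^ 2 * Real.exp (-2 * a * y)
      = (s * Real.exp (a ^ 2)) *
        ((eval y (HR k)) ^ 2 * Real.exp (-(y + a) ^ 2)) := by
    intro y
    rw [hermiteFun_eq, norm_mul, norm_mul]
    have hre : (-((y:ℂ) ^ 2) / 2).re = -(y ^ 2) / 2 := by
      have : -((y:ℂ) ^ 2) / 2 = ((-(y ^ 2) / 2 : ℝ) : ℂ) := by push_cast; ring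
      rw [this, Complex.ofReal_re]
    rw [Complex.norm_exp, hre]
    rw [eval_HC_ofReal, Complex.norm_real, Real.norm_eq_abs]
    have hexp2 : Real.exp (-(y ^ 2) / 2) ^ 2 * Real.exp (-2 * a * y)
        = Real.exp (a ^ 2) * Real.exp (-(y + a) ^ 2) := by
      rw [sq, ← Real.exp_add, ← Real.exp_add, ← Real.exp_add]
      ring_nf
    rw [mul_pow, mul_pow, sq_abs, ← hs]
    calc s * (eval y (HR k) ^ 2 * Real.exp (-y ^ 2 / 2) ^ 2) * Real.exp (-2 * a * y)
        = s * eval y (HR k) ^ 2 * (Real.exp (-(y ^ 2) / 2) ^ 2 * Real.exp (-2 * a * y)) := by ring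
      _ = s * eval y (HR k) ^ 2 * (Real.exp (a ^ 2) * Real.exp (-(y + a) ^ 2)) := by rw [hexp2]
      _ = (s * Real.exp (a ^ 2)) * ((eval y (HR k)) ^ 2 * Real.exp (-(y + a) ^ 2)) := by ring
  -- the core identity coming from J_congr
  have hcore : (∫ y : ℝ, ‖eval ((y:ℂ) - (a:ℂ) * Complex.I) (HC k)‖ ^ 2 * Real.exp (-y ^ 2))
      = ∫ y : ℝ, (eval (y - a) (HR k)) ^ 2 * Real.exp (-y ^ 2) := by
    apply Complex.ofReal_injective
    have hJ1 : J k (-(a:ℂ) * Complex.I) ((a:ℂ) * Complex.I)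
        = ((∫ y : ℝ, ‖eval ((y:ℂ) - (a:ℂ) * Complex.I) (HC k)‖ ^ 2 * Real.exp (-y ^ 2) : ℝ) : ℂ) := by
      have hco : ((∫ y : ℝ, ‖eval ((y:ℂ) - (a:ℂ) * Complex.I) (HC k)‖ ^ 2 * Real.exp (-y ^ 2) : ℝ) : ℂ)
          = ∫ y : ℝ, ((‖eval ((y:ℂ) - (a:ℂ) * Complex.I) (HC k)‖ ^ 2 * Real.exp (-y ^ 2) : ℝ) : ℂ) :=
        (integral_ofReal).symm
      rw [hco, J]
      refine integral_congr_ae (Filter.Eventually.of_forall fun y => ?_)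
      show eval ((y:ℂ) + (-(a:ℂ) * Complex.I)) (HC k) * eval ((y:ℂ) + (a:ℂ) * Complex.I) (HC k)
          * ((Real.exp (-y ^ 2) : ℝ) : ℂ)
        = ((‖eval ((y:ℂ) - (a:ℂ) * Complex.I) (HC k)‖ ^ 2 * Real.exp (-y ^ 2) : ℝ) : ℂ)
      have hc1 : (y:ℂ) + (-(a:ℂ) * Complex.I) = (y:ℂ) - (a:ℂ) * Complex.I := by ring
      have hconj : eval ((y:ℂ) + (a:ℂ) * Complex.I) (HC k)
          = (starRingEnd ℂ) (eval ((y:ℂ) - (a:ℂ) * Complex.I) (HC k)) := by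
        rw [eval_HC_conj]
        congr 1
        simp [map_sub, Complex.conj_I]
      rw [hc1, hconj, Complex.mul_conj]
      push_cast [Complex.normSq_eq_norm_sq]
      ring
    have hJ2 : J k (-(a:ℂ)) (-(a:ℂ))
        = ((∫ y : ℝ, (eval (y - a) (HR k)) ^ 2 * Real.exp (-y ^ 2) : ℝ) : ℂ) := by
      have hco : ((∫ y : ℝ, (eval (y - a) (HR k)) ^ 2 * Real.exp (-y ^ 2) : ℝ) : ℂ)
          = ∫ y : ℝ, (((eval (y - a) (HR k)) ^ 2 * Real.exp (-y ^ 2) : ℝ) : ℂ) :=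
        (integral_ofReal).symm
      rw [hco, J]
      refine integral_congr_ae (Filter.Eventually.of_forall fun y => ?_)
      show eval ((y:ℂ) + (-(a:ℂ))) (HC k) * eval ((y:ℂ) + (-(a:ℂ))) (HC k)
          * ((Real.exp (-y ^ 2) : ℝ) : ℂ)
        = (((eval (y - a) (HR k)) ^ 2 * Real.exp (-y ^ 2) : ℝ) : ℂ)
      have hc2 : (y:ℂ) + (-(a:ℂ)) = (((y - a : ℝ)) : ℂ) := by push_cast; ring
      rw [hc2, eval_HC_ofReal]
      push_cast
      ring
    rw [← hJ1, ← hJ2]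
    apply J_congr
    rw [mul_mul_mul_comm, Complex.I_mul_I]
    ring
  calc (∫ y : ℝ, ‖hermiteFun k ((y : ℂ) - (a : ℂ) * Complex.I)‖ ^ 2)
      = ∫ y : ℝ, (s * Real.exp (a ^ 2)) *
          (‖eval ((y:ℂ) - (a:ℂ) * Complex.I) (HC k)‖ ^ 2 * Real.exp (-y ^ 2)) :=
        integral_congr_ae (Filter.Eventually.of_forall hL)
    _ = (s * Real.exp (a ^ 2)) *
          ∫ y : ℝ, ‖eval ((y:ℂ) - (a:ℂ) * Complex.I) (HC k)‖ ^ 2 * Real.exp (-y ^ 2) :=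
        integral_const_mul _ _
    _ = (s * Real.exp (a ^ 2)) * ∫ y : ℝ, (eval (y - a) (HR k)) ^ 2 * Real.exp (-y ^ 2) := by
        rw [hcore]
    _ = (s * Real.exp (a ^ 2)) * ∫ y : ℝ, (eval (y + a - a) (HR k)) ^ 2 * Real.exp (-(y + a) ^ 2) := by
        rw [integral_add_right_eq_self (fun y => (eval (y - a) (HR k)) ^ 2 * Real.exp (-y ^ 2)) a]
    _ = ∫ y : ℝ, (s * Real.exp (a ^ 2)) * ((eval y (HR k)) ^ 2 * Real.exp (-(y + a) ^ 2)) := by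
        rw [← integral_const_mul]
        refine integral_congr_ae (Filter.Eventually.of_forall fun y => ?_)
        simp [add_sub_cancel_right]
    _ = ∫ y : ℝ, ‖hermiteFun k (y : ℂ)‖ ^ 2 * Real.exp (-2 * a * y) :=
        (integral_congr_ae (Filter.Eventually.of_forall hR)).symm
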